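/- Let (X,·) be a quasigroup satisfying the left Bol identity B14: x·(y·(x·z)) = (x·(y·x))·z for all x,y,z ∈ X. Let ∂₂ : ℤ[X × X] → ℤ[X] be the group homomorphism from the free abelian group on X × X to the free abelian group on X determined by ∂₂(a,b) = a − b − a·b (the substitution t = 1, s = −1), and for x,y,z ∈ X set ∂₃(x,y,z) = (x,z) − (y,xz) + (x,y(xz)) + (y,x) − (x,yx) − (x(yx),z) ∈ ℤ[X × X]. Then ∂₂(∂₃(x,y,z)) = 0 for all x,y,z ∈ X. -/
import Mathlib


open FreeAbelianGroup

/-- For a quasigroup satisfying the left Bol identity B14, the boundary maps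
`∂₂(a,b) = a − b − ab` (substitution `t = 1`, `s = −1`) and the B14 boundary `∂₃`
compose to zero: `∂₂ ∘ ∂₃ = 0`. -/
theorem leftBol_boundary_squared_zero {X : Type*} [Mul X]
    (hl : ∀ a b : X, ∃! x : X, a * x = b)
    (hr : ∀ a b : X, ∃! y : X, y * a = b)
    (hB14 : ∀ x y z : X, x * (y * (x * z)) = (x * (y * x)) * z)
    (d2 : FreeAbelianGroup (X × X) →+ FreeAbelianGroup X)
    (hd2 : ∀ a b : X, d2 (of (a, b)) = of a - of b - of (a * b)) :
    ∀ x y z : X,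
      d2 (of (x, z) - of (y, x * z) + of (x, y * (x * z))
          + of (y, x) - of (x, y * x) - of (x * (y * x), z)) = 0 := by
  intro x y z
  simp only [map_add, map_sub, hd2, hB14]
  abel
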